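/- arXiv:2311.10023 — 2 statements merged into one kernel-verified Lean document; each statement's English description precedes it below -/
import Mathlib

section
/- For every s ≥ 1, the logarithm of the ratio of consecutive weight sums satisfies the Hoeffding-type bound: log( Σ_{a∈𝒜} w^{s+1}(a) / Σ_{a∈𝒜} w^s(a) ) ≤ −η · Σ_{a∈𝒜} P^s(a) C(a, b_s) + 9η²Θ²/8. -/
open Finset

lemma hoeff_scalar (p : ℝ) (hp0 : 0 ≤ p) (hp1 : p ≤ 1) (h : ℝ) :
    1 - p + p * Real.exp h ≤ Real.exp (p * h + h ^ 2 / 8) := by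
  set u : ℝ → ℝ := fun x => 1 - p + p * Real.exp x with hu_def
  have hu : ∀ x, 0 < u x := by
    intro x
    rcases eq_or_lt_of_le hp0 with hp | hp
    · simp [hu_def, ← hp]
    · have := Real.exp_pos x
      have : 0 < p * Real.exp x := mul_pos hp (Real.exp_pos x)
      simp only [hu_def]
      nlinarith
  have hudv : ∀ x, HasDerivAt u (p * Real.exp x) x := by
    intro x
    exact ((Real.hasDerivAt_exp x).const_mul p).const_add (1 - p)
  set q : ℝ → ℝ := fun x => p * Real.exp x / u x with hq_def
  set g : ℝ → ℝ := fun x => p * x + x ^ 2 / 8 - Real.log (u x) with hg_def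
  set g' : ℝ → ℝ := fun x => p + x / 4 - q x with hg'_def
  have hg' : ∀ x, HasDerivAt g (g' x) x := by
    intro x
    have h1 : HasDerivAt (fun x => Real.log (u x)) (q x) x :=
      (hudv x).log (ne_of_gt (hu x))
    have h2 : HasDerivAt (fun x => p * x + x ^ 2 / 8) (p + x / 4) x := by
      have := ((hasDerivAt_pow 2 x).div_const 8).const_add 0
      have h3 : HasDerivAt (fun x : ℝ => p * x) p x := by
        simpa using (hasDerivAt_id x).const_mul p
      have h4 : HasDerivAt (fun x : ℝ => x ^ 2 / 8) (x / 4) x := by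
        have := (hasDerivAt_pow 2 x).div_const 8
        refine this.congr_deriv ?_
        rw [show (2:ℕ) - 1 = 1 from rfl]; push_cast; ring
      exact h3.add h4
    exact h2.sub h1
  have hg'' : ∀ x, HasDerivAt g' (1 / 4 - (q x - q x ^ 2)) x := by
    intro x
    have h1 : HasDerivAt q (q x - q x ^ 2) x := by
      have := (HasDerivAt.div ((Real.hasDerivAt_exp x).const_mul p) (hudv x)
        (ne_of_gt (hu x)))
      refine this.congr_deriv ?_
      have hne : (1:ℝ) - p + p * Real.exp x ≠ 0 := (hu x).ne'
      simp only [hq_def, hu_def]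
      field_simp
    have h2 : HasDerivAt (fun x : ℝ => p + x / 4) (1 / 4) x := by
      simpa using ((hasDerivAt_id x).div_const 4).const_add p
    exact h2.sub h1
  have hq0 : g' 0 = 0 := by
    simp [hg'_def, hq_def, hu_def, Real.exp_zero]
  have hmono : Monotone g' := by
    apply monotone_of_hasDerivAt_nonneg hg''
    intro x
    have : (q x - 1 / 2) ^ 2 ≥ 0 := sq_nonneg _
    simp only [Pi.zero_apply]
    nlinarith
  have hgd : Differentiable ℝ g := fun x => (hg' x).differentiableAt
  have hge : ∀ x, 0 ≤ g x := by
    have hg0 : g 0 = 0 := by simp [hg_def, hu_def]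
    intro x
    rcases le_total 0 x with hx | hx
    · have : MonotoneOn g (Set.Ici 0) := by
        apply monotoneOn_of_deriv_nonneg (convex_Ici 0) hgd.continuous.continuousOn
          hgd.differentiableOn
        intro y hy
        rw [(hg' y).deriv]
        rw [interior_Ici] at hy
        calc (0:ℝ) = g' 0 := hq0.symm
        _ ≤ g' y := hmono (le_of_lt hy)
      have := this (Set.self_mem_Ici) hx hx
      rw [hg0] at this; exact this
    · have : AntitoneOn g (Set.Iic 0) := by
        apply antitoneOn_of_deriv_nonpos (convex_Iic 0) hgd.continuous.continuousOn
          hgd.differentiableOn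
        intro y hy
        rw [(hg' y).deriv]
        rw [interior_Iic] at hy
        calc g' y ≤ g' 0 := hmono (le_of_lt hy)
        _ = 0 := hq0
      have := this hx (Set.self_mem_Iic) hx
      rw [hg0] at this; exact this
  have := hge h
  have hlog : Real.log (u h) ≤ p * h + h ^ 2 / 8 := by
    have := hge h
    simp only [hg_def] at this
    linarith
  calc u h = Real.exp (Real.log (u h)) := (Real.exp_log (hu h)).symm
  _ ≤ Real.exp (p * h + h ^ 2 / 8) := Real.exp_le_exp.2 hlog

/-- For every step `s ≥ 1`, the Hoeffding-type bound
`log(Σ_a w^{s+1}(a) / Σ_a w^s(a)) ≤ −η·Σ_a P^s(a)·C(a,b_s) + 9η²Θ²/8` holds.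
Here `w s` denotes the paper's `w^{s+1}` (so `w 0` is the paper's `w^1`),
`P s` the paper's `P^{s+1}`, and `b s` the paper's `b_{s+1}`; the index
`s : ℕ` thus ranges over all paper steps `s ≥ 1`. -/
theorem ew_weight_sum_ratio_hoeffding
    {α β : Type*} [Fintype α] [Nonempty α]
    (b : ℕ → β) (C : α → β → ℝ) (Θ : ℝ) (hΘ : 0 < Θ)
    (hC : ∀ a x, 0 ≤ C a x ∧ C a x ≤ 3 * Θ)
    (η : ℝ) (hη : 0 < η)
    (w : ℕ → α → ℝ)
    (hw : ∀ t a, w t a = Real.exp (-η * ∑ s ∈ Finset.range t, C a (b s)))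
    (P : ℕ → α → ℝ)
    (hP : ∀ t a, P t a = w t a / ∑ a' : α, w t a')
    (s : ℕ) :
    Real.log ((∑ a : α, w (s + 1) a) / (∑ a : α, w s a))
      ≤ -η * (∑ a : α, P s a * C a (b s)) + 9 * η ^ 2 * Θ ^ 2 / 8 := by
  set M := 3 * Θ with hM_def
  have hM : 0 < M := by positivity
  set X : α → ℝ := fun a => C a (b s) with hX_def
  set W : ℝ := ∑ a : α, w s a with hW_def
  have hwpos : ∀ t a, 0 < w t a := fun t a => by rw [hw]; exact Real.exp_pos _
  have hW : 0 < W := Finset.sum_pos (fun a _ => hwpos s a) univ_nonempty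
  have hPsum : ∑ a : α, P s a = 1 := by
    simp only [hP, ← Finset.sum_div]
    exact div_self hW.ne'
  have hPnn : ∀ a, 0 ≤ P s a := fun a => by
    rw [hP]; exact div_nonneg (hwpos s a).le hW.le
  -- ratio = Σ P a * exp (-η X a)
  have hstep : ∀ a, w (s + 1) a = w s a * Real.exp (-η * X a) := by
    intro a
    rw [hw (s+1) a, hw s a, Finset.sum_range_succ, mul_add, Real.exp_add]
  have hratio : (∑ a : α, w (s + 1) a) / W = ∑ a : α, P s a * Real.exp (-η * X a) := by
    rw [Finset.sum_div]
    refine Finset.sum_congr rfl fun a _ => ?_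
    rw [hstep a, hP]
    ring
  -- convexity bound
  have hconv : ∀ a : α, Real.exp (-η * X a)
      ≤ (1 - X a / M) + X a / M * Real.exp (-η * M) := by
    intro a
    have h0 : 0 ≤ X a := (hC a (b s)).1
    have h1 : X a ≤ M := (hC a (b s)).2
    have ht0 : 0 ≤ X a / M := div_nonneg h0 hM.le
    have ht1 : X a / M ≤ 1 := (div_le_one hM).2 h1
    have := convexOn_exp.2 (Set.mem_univ (0:ℝ)) (Set.mem_univ (-η * M))
      (by linarith : (0:ℝ) ≤ 1 - X a / M) ht0 (by ring)
    simp only [smul_eq_mul, mul_zero, zero_add, Real.exp_zero, mul_one] at this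
    have hx : X a / M * (-η * M) = -η * X a := by field_simp
    rw [hx] at this
    exact this
  set p : ℝ := (∑ a : α, P s a * X a) / M with hp_def
  have hXnn : ∀ a, 0 ≤ P s a * X a := fun a => mul_nonneg (hPnn a) (hC a (b s)).1
  have hp0 : 0 ≤ p := div_nonneg (Finset.sum_nonneg fun a _ => hXnn a) hM.le
  have hp1 : p ≤ 1 := by
    rw [hp_def, div_le_one hM]
    calc ∑ a : α, P s a * X a ≤ ∑ a : α, P s a * M :=
      Finset.sum_le_sum fun a _ => mul_le_mul_of_nonneg_left (hC a (b s)).2 (hPnn a)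
    _ = M := by rw [← Finset.sum_mul, hPsum, one_mul]
  have hsum : ∑ a : α, P s a * Real.exp (-η * X a)
      ≤ 1 - p + p * Real.exp (-η * M) := by
    calc ∑ a : α, P s a * Real.exp (-η * X a)
        ≤ ∑ a : α, P s a * ((1 - X a / M) + X a / M * Real.exp (-η * M)) :=
          Finset.sum_le_sum fun a _ => mul_le_mul_of_nonneg_left (hconv a) (hPnn a)
      _ = 1 - p + p * Real.exp (-η * M) := by
          have h1 : ∑ x : α, P s x * (X x / M) = p := by
            rw [hp_def, Finset.sum_div]
            exact Finset.sum_congr rfl fun a _ => by ring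
          have h2 : ∑ x : α, P s x * (X x / M * Real.exp (-η * M))
              = p * Real.exp (-η * M) := by
            rw [← h1, Finset.sum_mul]
            exact Finset.sum_congr rfl fun a _ => by ring
          simp only [mul_add, mul_sub, mul_one, Finset.sum_add_distrib, Finset.sum_sub_distrib,
            hPsum, h1, h2]
  have hkey : ∑ a : α, P s a * Real.exp (-η * X a)
      ≤ Real.exp (-η * (∑ a : α, P s a * X a) + 9 * η ^ 2 * Θ ^ 2 / 8) := by
    calc ∑ a : α, P s a * Real.exp (-η * X a) ≤ 1 - p + p * Real.exp (-η * M) := hsum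
    _ ≤ Real.exp (p * (-η * M) + (-η * M) ^ 2 / 8) := hoeff_scalar p hp0 hp1 _
    _ = Real.exp (-η * (∑ a : α, P s a * X a) + 9 * η ^ 2 * Θ ^ 2 / 8) := by
        congr 1
        rw [hp_def, hM_def]
        field_simp
        ring
  have hpos : 0 < ∑ a : α, P s a * Real.exp (-η * X a) :=
    Finset.sum_pos (fun a _ => mul_pos (by rw [hP]; exact div_pos (hwpos s a) hW)
      (Real.exp_pos _)) univ_nonempty
  rw [hratio]
  calc Real.log (∑ a : α, P s a * Real.exp (-η * X a))
      ≤ Real.log (Real.exp (-η * (∑ a : α, P s a * X a) + 9 * η ^ 2 * Θ ^ 2 / 8)) :=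
        Real.log_le_log hpos hkey
    _ = -η * (∑ a : α, P s a * X a) + 9 * η ^ 2 * Θ ^ 2 / 8 := Real.log_exp _
end

section
/- Suppose |𝒜| ≥ 2, T ≥ 1, and set η = √(log|𝒜| / T). Let (Ω, ℱ, μ) be a probability space and let A_1, …, A_T : Ω → 𝒜 be independent random variables such that the law of A_t is P^t for each t, and define the regret R_T = Σ_{t=1}^T C(A_t, b_t) − min_{a∈𝒜} Σ_{t=1}^T C(a, b_t). Then for every 0 < δ < 1, with probability at least 1 − δ, R_T ≤ (9Θ²/8 + 1)·√(T·log|𝒜|) + 3Θ·√( (1/2)·log(1/δ)·T ). -/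
open Finset MeasureTheory ProbabilityTheory


/-- Core scalar inequality behind Hoeffding's lemma. -/
lemma ew_aux_bernoulli_mgf (p q h : ℝ) (hp : 0 ≤ p) (hq : 0 ≤ q) (hpq : p + q = 1) :
    q + p * Real.exp h ≤ Real.exp (p * h + h ^ 2 / 8) := by
  have hpos : ∀ t : ℝ, 0 < q + p * Real.exp t := by
    intro t
    rcases hp.eq_or_lt with h0 | h0
    · have : q = 1 := by linarith
      simp [this, ← h0]
    · nlinarith [Real.exp_pos t]
  set φ : ℝ → ℝ := fun t => Real.log (q + p * Real.exp t) with hφ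
  set φ' : ℝ → ℝ := fun t => p * Real.exp t / (q + p * Real.exp t) with hφ'
  have hφd : ∀ t, HasDerivAt φ (φ' t) t := by
    intro t
    have h1 : HasDerivAt (fun t => q + p * Real.exp t) (p * Real.exp t) t :=
      ((Real.hasDerivAt_exp t).const_mul p).const_add q
    exact h1.log (hpos t).ne'
  have hφ'd : ∀ t, HasDerivAt φ' (p * q * Real.exp t / (q + p * Real.exp t) ^ 2) t := by
    intro t
    have h1 : HasDerivAt (fun t => p * Real.exp t) (p * Real.exp t) t :=
      (Real.hasDerivAt_exp t).const_mul p
    have h2 : HasDerivAt (fun t => q + p * Real.exp t) (p * Real.exp t) t :=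
      ((Real.hasDerivAt_exp t).const_mul p).const_add q
    have hne : (q + p * Real.exp t) ≠ 0 := (hpos t).ne'
    have := h1.div h2 hne
    exact this.congr_deriv (by ring)
  have hbound : ∀ t : ℝ, ‖p * q * Real.exp t / (q + p * Real.exp t) ^ 2‖ ≤ 1/4 := by
    intro t
    rw [Real.norm_eq_abs, abs_of_nonneg (by positivity)]
    rw [div_le_iff₀ (pow_pos (hpos t) 2)]
    nlinarith [sq_nonneg (q - p * Real.exp t), Real.exp_pos t]
  have hlip : ∀ t : ℝ, |φ' t - p| ≤ |t| / 4 := by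
    intro t
    have hphi0 : φ' 0 = p := by
      simp [hφ']
      rw [add_comm q p, hpq]
      simp
    have := Convex.norm_image_sub_le_of_norm_hasDerivWithin_le
      (f := φ') (f' := fun t => p * q * Real.exp t / (q + p * Real.exp t) ^ 2)
      (s := Set.univ) (C := 1/4)
      (fun x _ => (hφ'd x).hasDerivWithinAt) (fun x _ => hbound x) convex_univ
      (Set.mem_univ 0) (Set.mem_univ t)
    rw [hphi0] at this
    simp only [Real.norm_eq_abs, sub_zero] at this
    linarith
  set ψ : ℝ → ℝ := fun t => p * t + t ^ 2 / 8 - φ t with hψ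
  have hψd : ∀ t, HasDerivAt ψ (p + t / 4 - φ' t) t := by
    intro t
    have h1 : HasDerivAt (fun t : ℝ => p * t + t ^ 2 / 8) (p + t / 4) t := by
      have := ((hasDerivAt_id t).const_mul p).add ((hasDerivAt_pow 2 t).div_const 8)
      exact this.congr_deriv (by norm_num; ring)
    exact h1.sub (hφd t)
  have hψderiv : ∀ t, deriv ψ t = p + t / 4 - φ' t := fun t => (hψd t).deriv
  have hψcont : Continuous ψ := by
    refine continuous_iff_continuousAt.2 fun t => (hψd t).differentiableAt.continuousAt
  have hψdiff : Differentiable ℝ ψ := fun t => (hψd t).differentiableAt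
  have hψ0 : ψ 0 = 0 := by simp [hψ, hφ, hpq, add_comm q p]
  have key : 0 ≤ ψ h := by
    rcases le_or_gt 0 h with hh | hh
    · have hmono : MonotoneOn ψ (Set.Ici 0) :=
        monotoneOn_of_deriv_nonneg (convex_Ici 0) hψcont.continuousOn
          (hψdiff.differentiableOn)
          (fun x hx => by
            rw [hψderiv]
            rw [interior_Ici] at hx
            have := hlip x
            rw [abs_of_pos (Set.mem_Ioi.1 hx)] at this
            have := abs_le.1 this
            linarith [this.2])
      have := hmono (Set.mem_Ici.2 le_rfl) (Set.mem_Ici.2 hh) hh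
      rwa [hψ0] at this
    · have hanti : AntitoneOn ψ (Set.Iic 0) :=
        antitoneOn_of_deriv_nonpos (convex_Iic 0) hψcont.continuousOn
          (hψdiff.differentiableOn)
          (fun x hx => by
            rw [hψderiv]
            rw [interior_Iic] at hx
            have := hlip x
            rw [abs_of_neg (Set.mem_Iio.1 hx)] at this
            have := abs_le.1 this
            linarith [this.1])
      have := hanti (Set.mem_Iic.2 hh.le) (Set.mem_Iic.2 le_rfl) hh.le
      rwa [hψ0] at this
  have : φ h ≤ p * h + h ^ 2 / 8 := by
    have : 0 ≤ p * h + h ^ 2 / 8 - φ h := key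
    linarith
  calc q + p * Real.exp h = Real.exp (φ h) := (Real.exp_log (hpos h)).symm
    _ ≤ Real.exp (p * h + h ^ 2 / 8) := Real.exp_le_exp.2 this

/-- Hoeffding's lemma for a finitely supported distribution. -/
lemma ew_aux_hoeffding_fin {α : Type*} [Fintype α] (p : α → ℝ) (hp : ∀ a, 0 ≤ p a)
    (hsum : ∑ a, p a = 1) (f : α → ℝ) (c : ℝ) (hc : 0 < c)
    (hf : ∀ a, 0 ≤ f a ∧ f a ≤ c) (s : ℝ) :
    ∑ a, p a * Real.exp (s * f a) ≤
      Real.exp (s * (∑ a, p a * f a) + s ^ 2 * c ^ 2 / 8) := by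
  set m : ℝ := ∑ a, p a * f a with hm
  have hm0 : 0 ≤ m := Finset.sum_nonneg fun a _ => mul_nonneg (hp a) (hf a).1
  have hmc : m ≤ c := by
    calc m ≤ ∑ a, p a * c := Finset.sum_le_sum fun a _ => by
            exact mul_le_mul_of_nonneg_left (hf a).2 (hp a)
      _ = c := by rw [← Finset.sum_mul, hsum, one_mul]
  -- pointwise convexity bound: exp (s x) ≤ 1 + (x/c) * (exp (s c) - 1) for x ∈ [0, c]
  have hpt : ∀ a, Real.exp (s * f a) ≤ 1 + (f a / c) * (Real.exp (s * c) - 1) := by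
    intro a
    have h1 : (1 - f a / c) • (0:ℝ) + (f a / c) • c = f a := by
      field_simp
      simp only [smul_eq_mul, mul_zero, zero_add]
      exact div_mul_cancel₀ _ hc.ne'
    have h2 := convexOn_exp.2 (Set.mem_univ (s * 0)) (Set.mem_univ (s * c))
      (show (0:ℝ) ≤ 1 - f a / c by
        have := div_le_one_of_le₀ (hf a).2 hc.le
        linarith)
      (div_nonneg (hf a).1 hc.le) (by ring)
    have h3 : (1 - f a / c) • (s * 0) + (f a / c) • (s * c) = s * f a := by
      simp only [smul_eq_mul]
      field_simp
      ring
    rw [h3] at h2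
    simp only [smul_eq_mul, mul_zero, Real.exp_zero, mul_one] at h2
    calc Real.exp (s * f a) ≤ (1 - f a / c) * 1 + (f a / c) * Real.exp (s * c) := by
          simpa using h2
      _ = 1 + (f a / c) * (Real.exp (s * c) - 1) := by ring
  calc ∑ a, p a * Real.exp (s * f a)
      ≤ ∑ a, p a * (1 + (f a / c) * (Real.exp (s * c) - 1)) :=
        Finset.sum_le_sum fun a _ => mul_le_mul_of_nonneg_left (hpt a) (hp a)
    _ = 1 + (m / c) * (Real.exp (s * c) - 1) := by
        have h4 : ∀ x : α, p x * (1 + f x / c * (Real.exp (s * c) - 1))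
            = p x + p x * f x * ((Real.exp (s * c) - 1) / c) := fun x => by
          field_simp
        rw [Finset.sum_congr rfl fun x _ => h4 x, Finset.sum_add_distrib, hsum,
          ← Finset.sum_mul, ← hm]
        ring
    _ = (1 - m / c) + (m / c) * Real.exp (s * c) := by ring
    _ ≤ Real.exp ((m / c) * (s * c) + (s * c) ^ 2 / 8) := by
        apply ew_aux_bernoulli_mgf
        · positivity
        · have : m / c ≤ 1 := div_le_one_of_le₀ hmc hc.le
          linarith
        · ring
    _ = Real.exp (s * m + s ^ 2 * c ^ 2 / 8) := by
        congr 1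
        field_simp

/-- (Theorem 1 of the paper.) Suppose `|𝒜| ≥ 2`, `T ≥ 1`, and
`η = √(log|𝒜|/T)`. If `A_1, …, A_T` are independent random draws with
`A_t ∼ P^t` and `R_T = Σ_{t=1}^T C(A_t,b_t) − min_{a∈𝒜} Σ_{t=1}^T C(a,b_t)`,
then for every `0 < δ < 1`, with probability at least `1 − δ`,
`R_T ≤ (9Θ²/8 + 1)·√(T·log|𝒜|) + 3Θ·√((1/2)·log(1/δ)·T)`.
Here `A t`, `b t`, `P t` for `t : Fin T` denote the paper's
`A_{t+1}`, `b_{t+1}`, `P^{t+1}`. -/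
theorem ew_high_probability_regret_bound_tuned
    {α β : Type*} [Fintype α] [Nonempty α]
    [MeasurableSpace α] [MeasurableSingletonClass α]
    (hcard : 2 ≤ Fintype.card α)
    (b : ℕ → β) (C : α → β → ℝ) (Θ : ℝ) (hΘ : 0 < Θ)
    (hC : ∀ a x, 0 ≤ C a x ∧ C a x ≤ 3 * Θ)
    (T : ℕ) (hT : 1 ≤ T)
    (η : ℝ) (hη : η = Real.sqrt (Real.log (Fintype.card α) / T))
    (w : ℕ → α → ℝ)
    (hw : ∀ t a, w t a = Real.exp (-η * ∑ s ∈ Finset.range t, C a (b s)))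
    (P : ℕ → α → ℝ)
    (hP : ∀ t a, P t a = w t a / ∑ a' : α, w t a')
    {Ω : Type*} [MeasurableSpace Ω] (μ : Measure Ω) [IsProbabilityMeasure μ]
    (A : Fin T → Ω → α)
    (hAmeas : ∀ t, Measurable (A t))
    (hAindep : iIndepFun A μ)
    (hAlaw : ∀ (t : Fin T) (a : α), μ (A t ⁻¹' {a}) = ENNReal.ofReal (P t.val a))
    (R : Ω → ℝ)
    (hR : ∀ ω, R ω = (∑ t : Fin T, C (A t ω) (b t.val))
        - Finset.univ.inf' Finset.univ_nonempty
            (fun a : α => ∑ t : Fin T, C a (b t.val)))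
    (δ : ℝ) (hδ0 : 0 < δ) (hδ1 : δ < 1) :
    1 - ENNReal.ofReal δ ≤
      μ {ω | R ω ≤ (9 * Θ ^ 2 / 8 + 1) * Real.sqrt (T * Real.log (Fintype.card α))
              + 3 * Θ * Real.sqrt ((1 / 2) * Real.log (1 / δ) * T)} := by
  classical
  have hK2 : (2 : ℝ) ≤ (Fintype.card α : ℝ) := by exact_mod_cast hcard
  set L : ℝ := Real.log (Fintype.card α) with hLdef
  have hL0 : 0 < L := Real.log_pos (by linarith)
  have hT0 : (0 : ℝ) < (T : ℝ) := by exact_mod_cast hT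
  have hη0 : 0 < η := by rw [hη]; exact Real.sqrt_pos.2 (div_pos hL0 hT0)
  have hη2 : η ^ 2 = L / T := by
    rw [hη]; exact Real.sq_sqrt (le_of_lt (div_pos hL0 hT0))
  set c : ℝ := 3 * Θ with hcdef
  have hc0 : 0 < c := by positivity
  -- basic facts about weights and distributions
  have hwpos : ∀ t a, 0 < w t a := fun t a => by rw [hw]; exact Real.exp_pos _
  set W : ℕ → ℝ := fun t => ∑ a, w t a with hWdef
  have hWpos : ∀ t, 0 < W t :=
    fun t => Finset.sum_pos (fun a _ => hwpos t a) Finset.univ_nonempty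
  have hPpos : ∀ t a, 0 < P t a := fun t a => by
    rw [hP]; exact div_pos (hwpos t a) (hWpos t)
  have hPsum : ∀ t, ∑ a, P t a = 1 := fun t => by
    simp only [hP]; rw [← Finset.sum_div]; exact div_self (hWpos t).ne'
  set m : ℕ → ℝ := fun t => ∑ a, P t a * C a (b t) with hmdef
  -- the one step recursion for the total weight
  have hstep : ∀ t, W (t + 1) = W t * ∑ a, P t a * Real.exp (-η * C a (b t)) := by
    intro t
    rw [Finset.mul_sum]
    refine Finset.sum_congr rfl fun a _ => ?_
    rw [hP, hw, hw, Finset.sum_range_succ, mul_add, Real.exp_add]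
    rw [show (∑ a' : α, w t a') = W t from rfl]
    field_simp [(hWpos t).ne']
  have hstep2 : ∀ t, W (t + 1) ≤ W t * Real.exp (-η * m t + η ^ 2 * c ^ 2 / 8) := by
    intro t
    rw [hstep t]
    refine mul_le_mul_of_nonneg_left ?_ (hWpos t).le
    have := ew_aux_hoeffding_fin (P t) (fun a => (hPpos t a).le) (hPsum t)
      (fun a => C a (b t)) c hc0 (fun a => hC a (b t)) (-η)
    simpa [neg_sq] using this
  have hiter : ∀ n, W n ≤ W 0 * Real.exp (∑ t ∈ Finset.range n, (-η * m t + η ^ 2 * c ^ 2 / 8)) := by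
    intro n
    induction n with
    | zero => simp
    | succ n ih =>
      calc W (n + 1) ≤ W n * Real.exp (-η * m n + η ^ 2 * c ^ 2 / 8) := hstep2 n
        _ ≤ (W 0 * Real.exp (∑ t ∈ Finset.range n, (-η * m t + η ^ 2 * c ^ 2 / 8)))
              * Real.exp (-η * m n + η ^ 2 * c ^ 2 / 8) :=
          mul_le_mul_of_nonneg_right ih (Real.exp_pos _).le
        _ = W 0 * Real.exp (∑ t ∈ Finset.range (n + 1), (-η * m t + η ^ 2 * c ^ 2 / 8)) := by
          rw [mul_assoc, ← Real.exp_add, Finset.sum_range_succ]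
  have hW0 : W 0 = (Fintype.card α : ℝ) := by
    simp [hWdef, hw]
  -- the best fixed action
  obtain ⟨a₀, -, ha₀⟩ := Finset.exists_mem_eq_inf' (Finset.univ_nonempty)
    (fun a : α => ∑ t : Fin T, C a (b t.val))
  set Mn : ℝ := Finset.univ.inf' Finset.univ_nonempty
    (fun a : α => ∑ t : Fin T, C a (b t.val)) with hMndef
  have hMn : Mn = ∑ t ∈ Finset.range T, C a₀ (b t) := by
    rw [ha₀]
    exact Fin.sum_univ_eq_sum_range (fun t => C a₀ (b t)) T
  have hlow : Real.exp (-η * ∑ t ∈ Finset.range T, C a₀ (b t)) ≤ W T := by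
    rw [← hw T a₀]
    exact Finset.single_le_sum (fun a _ => (hwpos T a).le) (Finset.mem_univ a₀)
  -- deterministic regret bound for the means
  set M : ℝ := ∑ t ∈ Finset.range T, m t with hMdef
  have hreg : M ≤ Mn + L / η + η * T * c ^ 2 / 8 := by
    have h5 : Real.exp (-η * ∑ t ∈ Finset.range T, C a₀ (b t)) ≤
        (Fintype.card α : ℝ) * Real.exp (∑ t ∈ Finset.range T, (-η * m t + η ^ 2 * c ^ 2 / 8)) := by
      calc Real.exp (-η * ∑ t ∈ Finset.range T, C a₀ (b t)) ≤ W T := hlow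
        _ ≤ W 0 * Real.exp (∑ t ∈ Finset.range T, (-η * m t + η ^ 2 * c ^ 2 / 8)) := hiter T
        _ = _ := by rw [hW0]
    have h6 := Real.log_le_log (Real.exp_pos _) h5
    rw [Real.log_exp, Real.log_mul (by positivity) (Real.exp_pos _).ne', Real.log_exp,
      ← hLdef] at h6
    rw [Finset.sum_add_distrib, Finset.sum_const, Finset.card_range, nsmul_eq_mul,
      ← Finset.mul_sum, ← hMdef] at h6
    -- h6 : -η * Mn' ≤ L + (-η * M + T * (η^2 * c^2/8))
    have h8 : η * (Mn + L / η + η * T * c ^ 2 / 8)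
        = η * (∑ t ∈ Finset.range T, C a₀ (b t)) + L + (T : ℝ) * (η ^ 2 * c ^ 2 / 8) := by
      rw [hMn]; field_simp
    refine le_of_mul_le_mul_left ?_ hη0
    rw [h8]
    nlinarith [h6]
  -- algebraic identity for the tuned step size
  have hsL : Real.sqrt L * Real.sqrt L = L := Real.mul_self_sqrt hL0.le
  have hsT : Real.sqrt (T : ℝ) * Real.sqrt (T : ℝ) = (T : ℝ) := Real.mul_self_sqrt hT0.le
  have hsL0 : 0 < Real.sqrt L := Real.sqrt_pos.2 hL0
  have hsT0 : 0 < Real.sqrt (T : ℝ) := Real.sqrt_pos.2 hT0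
  have hηeq : η = Real.sqrt L / Real.sqrt (T : ℝ) := by
    rw [hη, Real.sqrt_div hL0.le]
  have hsTL : Real.sqrt ((T : ℝ) * L) = Real.sqrt (T : ℝ) * Real.sqrt L :=
    Real.sqrt_mul hT0.le L
  have halg : L / η + η * T * c ^ 2 / 8 = (9 * Θ ^ 2 / 8 + 1) * Real.sqrt ((T : ℝ) * L) := by
    rw [hηeq, hsTL, hcdef]
    field_simp
    linear_combination (-8 * (Real.sqrt (T:ℝ) * Real.sqrt (T:ℝ))) * hsL
      + (-9 * Θ ^ 2 * (Real.sqrt L * Real.sqrt L)) * hsT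
  -- probabilistic part
  set X : Fin T → Ω → ℝ := fun t ω => C (A t ω) (b t.val) with hXdef
  have hXmeas : ∀ t, Measurable (X t) :=
    fun t => (measurable_of_countable (fun a => C a (b t.val))).comp (hAmeas t)
  have hXindep : iIndepFun X μ :=
    hAindep.comp (fun t a => C a (b t.val)) (fun t => measurable_of_countable _)
  have hint : ∀ (t : Fin T) (g : α → ℝ), ∫ ω, g (A t ω) ∂μ = ∑ a, P t.val a * g a := by
    intro t g
    have hg : Measurable g := measurable_of_countable g
    rw [← MeasureTheory.integral_map (hAmeas t).aemeasurable hg.aestronglyMeasurable]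
    haveI : IsProbabilityMeasure (μ.map (A t)) :=
      Measure.isProbabilityMeasure_map (hAmeas t).aemeasurable
    rw [MeasureTheory.integral_fintype .of_finite]
    refine Finset.sum_congr rfl fun a _ => ?_
    rw [measureReal_def, Measure.map_apply (hAmeas t) (measurableSet_singleton a), hAlaw t a,
      ENNReal.toReal_ofReal (hPpos t.val a).le, smul_eq_mul]
  have hmgf : ∀ (t : Fin T) (s : ℝ),
      mgf (X t) μ s = ∑ a, P t.val a * Real.exp (s * C a (b t.val)) := by
    intro t s
    exact hint t (fun a => Real.exp (s * C a (b t.val)))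
  set S : Ω → ℝ := fun ω => ∑ t : Fin T, X t ω with hSdef
  have hSmeas : Measurable S := by
    apply Finset.measurable_sum
    exact fun t _ => hXmeas t
  have hSfun : S = ∑ t : Fin T, X t := by
    ext ω; simp [hSdef, Finset.sum_apply]
  have hMalt : M = ∑ t : Fin T, m t.val := (Fin.sum_univ_eq_sum_range m T).symm
  have hlogδ : 0 < Real.log (1 / δ) := Real.log_pos ((one_lt_div hδ0).2 hδ1)
  set t₀ : ℝ := 3 * Θ * Real.sqrt ((1 / 2) * Real.log (1 / δ) * T) with ht₀def
  have hargpos : 0 < (1 / 2) * Real.log (1 / δ) * T := by positivity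
  have ht₀pos : 0 < t₀ := by
    rw [ht₀def]
    exact mul_pos (by positivity) (Real.sqrt_pos.2 hargpos)
  have ht₀sq : t₀ ^ 2 = c ^ 2 * ((1 / 2) * Real.log (1 / δ) * T) := by
    rw [ht₀def, mul_pow, Real.sq_sqrt hargpos.le, hcdef]
  set s₀ : ℝ := 4 * t₀ / (T * c ^ 2) with hs₀def
  have hs₀pos : 0 < s₀ := by
    rw [hs₀def]; positivity
  -- the mgf of each X t
  have hmgfB : ∀ t : Fin T, mgf (X t) μ s₀ ≤ Real.exp (s₀ * m t.val + s₀ ^ 2 * c ^ 2 / 8) := by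
    intro t
    rw [hmgf t s₀]
    exact ew_aux_hoeffding_fin (P t.val) (fun a => (hPpos t.val a).le) (hPsum t.val)
      (fun a => C a (b t.val)) c hc0 (fun a => hC a (b t.val)) s₀
  have hmgfS : mgf S μ s₀ ≤ Real.exp (s₀ * M + T * (s₀ ^ 2 * c ^ 2 / 8)) := by
    rw [hSfun, hXindep.mgf_sum hXmeas Finset.univ]
    calc ∏ t : Fin T, mgf (X t) μ s₀
        ≤ ∏ t : Fin T, Real.exp (s₀ * m t.val + s₀ ^ 2 * c ^ 2 / 8) :=
          Finset.prod_le_prod (fun t _ => mgf_nonneg) (fun t _ => hmgfB t)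
      _ = Real.exp (∑ t : Fin T, (s₀ * m t.val + s₀ ^ 2 * c ^ 2 / 8)) :=
          (Real.exp_sum _ _).symm
      _ = Real.exp (s₀ * M + T * (s₀ ^ 2 * c ^ 2 / 8)) := by
          congr 1
          have hsum2 : ∑ t : Fin T, (s₀ * m t.val + s₀ ^ 2 * c ^ 2 / 8)
              = s₀ * (∑ t : Fin T, m t.val) + T * (s₀ ^ 2 * c ^ 2 / 8) := by
            rw [Finset.sum_add_distrib, Finset.sum_const, Finset.card_univ, Fintype.card_fin,
              nsmul_eq_mul, ← Finset.mul_sum]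
          rw [hsum2, ← hMalt]
  -- integrability of exp (s₀ * S)
  have hSbound : ∀ ω, S ω ≤ T * c := by
    intro ω
    calc S ω ≤ ∑ _t : Fin T, c := Finset.sum_le_sum fun t _ => (hC _ _).2
      _ = T * c := by
        rw [Finset.sum_const, Finset.card_univ, Fintype.card_fin, nsmul_eq_mul]
  have hint_exp : Integrable (fun ω => Real.exp (s₀ * S ω)) μ := by
    refine Integrable.mono' (integrable_const (Real.exp (s₀ * (T * c))))
      ((hSmeas.const_mul s₀).exp.aestronglyMeasurable) ?_
    filter_upwards with ω
    rw [Real.norm_eq_abs, abs_of_pos (Real.exp_pos _)]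
    exact Real.exp_le_exp.2 (mul_le_mul_of_nonneg_left (hSbound ω) hs₀pos.le)
  have hchern := measure_ge_le_exp_mul_mgf (μ := μ) (X := S) (M + t₀) hs₀pos.le hint_exp
  -- the Chernoff bound evaluates to δ
  have hδbound : (μ {ω | M + t₀ ≤ S ω}).toReal ≤ δ := by
    refine hchern.trans ?_
    calc Real.exp (-s₀ * (M + t₀)) * mgf S μ s₀
        ≤ Real.exp (-s₀ * (M + t₀)) * Real.exp (s₀ * M + T * (s₀ ^ 2 * c ^ 2 / 8)) :=
          mul_le_mul_of_nonneg_left hmgfS (Real.exp_pos _).le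
      _ = Real.exp (-s₀ * (M + t₀) + (s₀ * M + T * (s₀ ^ 2 * c ^ 2 / 8))) :=
          (Real.exp_add _ _).symm
      _ = δ := by
          have hexp : -s₀ * (M + t₀) + (s₀ * M + T * (s₀ ^ 2 * c ^ 2 / 8)) = Real.log δ := by
            have hlog : Real.log (1 / δ) = -Real.log δ := by
              rw [one_div, Real.log_inv]
            rw [hs₀def]
            field_simp
            linear_combination (-16) * ht₀sq
              + (-8 * c ^ 2 * (T:ℝ)) * hlog
          rw [hexp, Real.exp_log hδ0]
  -- conclude
  set G : Set Ω := {ω | S ω ≤ M + t₀} with hGdef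
  have hGmeas : MeasurableSet G := hSmeas measurableSet_Iic
  have hGc : μ Gᶜ ≤ ENNReal.ofReal δ := by
    refine le_trans (measure_mono ?_) ((ENNReal.le_ofReal_iff_toReal_le
      (measure_ne_top μ _) hδ0.le).2 hδbound)
    intro ω hω
    simp only [hGdef, Set.mem_compl_iff, Set.mem_setOf_eq, not_le] at hω
    exact le_of_lt hω
  have hsub : G ⊆ {ω | R ω ≤ (9 * Θ ^ 2 / 8 + 1) * Real.sqrt (T * Real.log (Fintype.card α))
      + 3 * Θ * Real.sqrt ((1 / 2) * Real.log (1 / δ) * T)} := by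
    intro ω hω
    simp only [hGdef, Set.mem_setOf_eq] at hω
    simp only [Set.mem_setOf_eq]
    rw [hR ω]
    have hs : (∑ t : Fin T, C (A t ω) (b t.val)) = S ω := rfl
    rw [hs, ← hLdef, ← halg, ← ht₀def]
    have := hreg
    linarith
  calc 1 - ENNReal.ofReal δ ≤ 1 - μ Gᶜ := tsub_le_tsub_left hGc 1
    _ = μ G := by
      rw [prob_compl_eq_one_sub hGmeas, ENNReal.sub_sub_cancel ENNReal.one_ne_top prob_le_one]
    _ ≤ _ := measure_mono hsub
end
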